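/- With β = z/sqrt(z²-1) (z > 1 real) and E₃ the polynomial obtained from the recursion E₃(β) = (1/2)(β²-1)²E₂'(β) + (1/2)∫_0^β (p²-1)²(E₁'(p))² dp, one has β⁻¹·E₃(β) = (56z⁸ - 252z⁶ + 441z⁴ + 1860z² + 3420)/(5760(z²-1)⁴). -/

import Mathlib

noncomputable def E1 (b : ℝ) : ℝ := (1 / 24) * b * (5 * b ^ 2 - 6)

noncomputable def E2 (b : ℝ) : ℝ := (1 / 16) * (b ^ 2 - 1) ^ 2 * (5 * b ^ 2 - 2)

noncomputable def E3 (b : ℝ) : ℝ :=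
  (1 / 2) * (b ^ 2 - 1) ^ 2 * deriv E2 b
    + (1 / 2) * ∫ p in (0:ℝ)..b, (p ^ 2 - 1) ^ 2 * (deriv E1 p) ^ 2

noncomputable def beta (z : ℝ) : ℝ := z / Real.sqrt (z ^ 2 - 1)

lemma deriv_E1 (b : ℝ) : deriv E1 b = (5 * b ^ 2 - 2) / 8 := by
  have h : HasDerivAt E1 ((5 * b ^ 2 - 2) / 8) b := by
    have h1 := ((hasDerivAt_id b).const_mul (1 / 24 : ℝ)).mul
      (((hasDerivAt_pow 2 b).const_mul (5 : ℝ)).sub_const 6)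
    refine HasDerivAt.congr_deriv h1 ?_
    simp only [id_eq]
    push_cast
    ring
  exact h.deriv

lemma deriv_E2 (b : ℝ) : deriv E2 b = (3 / 8) * b * (b ^ 2 - 1) * (5 * b ^ 2 - 3) := by
  have h : HasDerivAt E2 ((3 / 8) * b * (b ^ 2 - 1) * (5 * b ^ 2 - 3)) b := by
    have h1 := ((((hasDerivAt_pow 2 b).sub_const 1).pow 2).const_mul (1 / 16 : ℝ)).mul
      (((hasDerivAt_pow 2 b).const_mul (5 : ℝ)).sub_const 2)
    refine HasDerivAt.congr_deriv h1 ?_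
    simp only [Pi.pow_apply]
    push_cast
    ring
  exact h.deriv

lemma integral_part (b : ℝ) :
    (∫ p in (0:ℝ)..b, (p ^ 2 - 1) ^ 2 * ((5 * p ^ 2 - 2) / 8) ^ 2)
      = (1 / 64) * (25 * b ^ 9 / 9 - 10 * b ^ 7 + 69 * b ^ 5 / 5 - 28 * b ^ 3 / 3 + 4 * b) := by
  have key : ∀ p : ℝ, HasDerivAt
      (fun x : ℝ => (1 / 64) * (25 * x ^ 9 / 9 - 10 * x ^ 7 + 69 * x ^ 5 / 5 - 28 * x ^ 3 / 3 + 4 * x))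
      ((p ^ 2 - 1) ^ 2 * ((5 * p ^ 2 - 2) / 8) ^ 2) p := by
    intro p
    have d9 := (hasDerivAt_pow 9 p).const_mul (25 : ℝ)
    have d7 := (hasDerivAt_pow 7 p).const_mul (10 : ℝ)
    have d5 := (hasDerivAt_pow 5 p).const_mul (69 : ℝ)
    have d3 := (hasDerivAt_pow 3 p).const_mul (28 : ℝ)
    have d1 := (hasDerivAt_id p).const_mul (4 : ℝ)
    have h1 := (((((d9.div_const 9).sub d7).add (d5.div_const 5)).sub (d3.div_const 3)).add d1).const_mul (1 / 64 : ℝ)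
    refine HasDerivAt.congr_deriv h1 ?_
    push_cast
    ring
  have hcont : IntervalIntegrable
      (fun p : ℝ => (p ^ 2 - 1) ^ 2 * ((5 * p ^ 2 - 2) / 8) ^ 2) MeasureTheory.volume 0 b := by
    apply Continuous.intervalIntegrable
    continuity
  rw [intervalIntegral.integral_eq_sub_of_hasDerivAt (fun p _ => key p) hcont]
  ring

theorem G2_formula :
    ∀ z : ℝ, 1 < z →
      (beta z)⁻¹ * E3 (beta z)
        = (56 * z ^ 8 - 252 * z ^ 6 + 441 * z ^ 4 + 1860 * z ^ 2 + 3420)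
            / (5760 * (z ^ 2 - 1) ^ 4) := by
  intro z hz
  have hz2 : (0:ℝ) < z ^ 2 - 1 := by nlinarith
  have hs : Real.sqrt (z ^ 2 - 1) > 0 := Real.sqrt_pos.mpr hz2
  have hzpos : (0:ℝ) < z := lt_trans one_pos hz
  have hb : beta z ≠ 0 := by
    unfold beta
    positivity
  have hb2 : (beta z) ^ 2 = z ^ 2 / (z ^ 2 - 1) := by
    unfold beta
    rw [div_pow, Real.sq_sqrt hz2.le]
  have hE3 : ∀ b : ℝ, E3 b = b * ((3 / 16) * (b ^ 2 - 1) ^ 3 * (5 * b ^ 2 - 3)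
      + (1 / 128) * (25 * (b ^ 2) ^ 4 / 9 - 10 * (b ^ 2) ^ 3 + 69 * (b ^ 2) ^ 2 / 5
        - 28 * (b ^ 2) / 3 + 4)) := by
    intro b
    unfold E3
    rw [deriv_E2]
    have hi : (∫ p in (0:ℝ)..b, (p ^ 2 - 1) ^ 2 * (deriv E1 p) ^ 2)
        = (1 / 64) * (25 * b ^ 9 / 9 - 10 * b ^ 7 + 69 * b ^ 5 / 5 - 28 * b ^ 3 / 3 + 4 * b) := by
      rw [← integral_part b]
      apply intervalIntegral.integral_congr
      intro p _
      simp only [deriv_E1]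
    rw [hi]
    ring
  rw [hE3, ← mul_assoc, inv_mul_cancel₀ hb, one_mul, hb2]
  have h2 : z ^ 2 - 1 ≠ 0 := ne_of_gt hz2
  field_simp
  ring
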